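/- Under the same setting as the decomposable regularization bound but with λ > 1/R*(∇L(θ*)) > 0, any minimizer θ̂ of θ ↦ R(θ) + λ·L(θ) satisfies ‖θ̂ − θ*‖₂² ≤ (2/κ²)·R*(∇L(θ*))²·Ψ(M̄)² + (8/κ²)·R*(∇L(θ*))²·Ψ(M̄^⊥)² + (4/(κλ))·R(θ*_{M^⊥}). -/

import Mathlib

variable {n : ℕ}

lemma seminorm_sum_le {ι : Type*} (R : Seminorm ℝ (EuclideanSpace ℝ (Fin n)))
    (s : Finset ι) (f : ι → EuclideanSpace ℝ (Fin n)) :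
    R (∑ i ∈ s, f i) ≤ ∑ i ∈ s, R (f i) := by
  classical
  induction s using Finset.induction with
  | empty => simp
  | insert _ _ h ih =>
    rw [Finset.sum_insert h, Finset.sum_insert h]
    exact (map_add_le_add R _ _).trans (by linarith)

lemma seminorm_upper (R : Seminorm ℝ (EuclideanSpace ℝ (Fin n))) :
    ∃ C : ℝ, 0 < C ∧ ∀ u, R u ≤ C * ‖u‖ := by
  set b := EuclideanSpace.basisFun (Fin n) ℝ
  refine ⟨(∑ i, R (b i)) + 1, by positivity, fun u => ?_⟩
  have hrepr : u = ∑ i, u i • (b i : EuclideanSpace ℝ (Fin n)) := by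
    have := b.toBasis.sum_repr u
    simpa [b, OrthonormalBasis.coe_toBasis_repr_apply, OrthonormalBasis.coe_toBasis,
      EuclideanSpace.basisFun_repr] using this.symm
  have h1 : R u ≤ ∑ i, |u i| * R (b i) := by
    calc R u = R (∑ i, u i • (b i : EuclideanSpace ℝ (Fin n))) := by rw [← hrepr]
    _ ≤ ∑ i, R (u i • (b i : EuclideanSpace ℝ (Fin n))) := seminorm_sum_le R _ _
    _ = ∑ i, |u i| * R (b i) := by simp [map_smul_eq_mul, Real.norm_eq_abs]
  have h2 : ∀ i, |u i| ≤ ‖u‖ := by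
    intro i
    have := abs_real_inner_le_norm (EuclideanSpace.single i (1:ℝ)) u
    simpa [EuclideanSpace.inner_single_left] using this
  calc R u ≤ ∑ i, |u i| * R (b i) := h1
  _ ≤ ∑ i, ‖u‖ * R (b i) := by
      refine Finset.sum_le_sum fun i _ => mul_le_mul_of_nonneg_right (h2 i) (apply_nonneg R _)
  _ = (∑ i, R (b i)) * ‖u‖ := by rw [Finset.sum_mul]; exact Finset.sum_congr rfl fun i _ => mul_comm _ _
  _ ≤ ((∑ i, R (b i)) + 1) * ‖u‖ := by
      have : (0:ℝ) ≤ ‖u‖ := norm_nonneg u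
      nlinarith

lemma seminorm_lower (R : Seminorm ℝ (EuclideanSpace ℝ (Fin n)))
    (hdef : ∀ u, R u = 0 → u = 0) :
    ∃ c : ℝ, 0 < c ∧ ∀ u, c * ‖u‖ ≤ R u := by
  obtain ⟨C, hC, hCle⟩ := seminorm_upper R
  have hcont : Continuous fun u : EuclideanSpace ℝ (Fin n) => R u := by
    refine (LipschitzWith.of_dist_le_mul (K := ⟨C, hC.le⟩) fun x y => ?_).continuous
    have h1 : ‖R x - R y‖ ≤ R (x - y) := R.norm_sub_map_le_sub x y
    have h2 : R (x - y) ≤ C * ‖x - y‖ := hCle _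
    rw [Real.dist_eq, dist_eq_norm]
    calc |R x - R y| ≤ R (x - y) := by simpa [Real.norm_eq_abs] using h1
    _ ≤ C * ‖x - y‖ := h2
  by_cases hsph : (Metric.sphere (0 : EuclideanSpace ℝ (Fin n)) 1).Nonempty
  · obtain ⟨u₀, hu₀, hmin⟩ := (isCompact_sphere (0 : EuclideanSpace ℝ (Fin n)) 1).exists_isMinOn
      hsph hcont.continuousOn
    have hu₀1 : ‖u₀‖ = 1 := by simpa using mem_sphere_zero_iff_norm.mp hu₀
    have hu₀0 : u₀ ≠ 0 := by intro h; rw [h] at hu₀1; simp at hu₀1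
    have hpos : 0 < R u₀ := lt_of_le_of_ne (apply_nonneg R u₀) (fun h => hu₀0 (hdef _ h.symm))
    refine ⟨R u₀, hpos, fun u => ?_⟩
    by_cases hu : u = 0
    · simp [hu]
    · have hnu : 0 < ‖u‖ := norm_pos_iff.mpr hu
      set v := ‖u‖⁻¹ • u with hv
      have hvn : ‖v‖ = 1 := by
        rw [hv, norm_smul, Real.norm_eq_abs, abs_of_pos (inv_pos.mpr hnu), inv_mul_cancel₀ hnu.ne']
      have hvs : v ∈ Metric.sphere (0 : EuclideanSpace ℝ (Fin n)) 1 :=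
        mem_sphere_zero_iff_norm.mpr hvn
      have hle : R u₀ ≤ R v := hmin hvs
      have : R u = ‖u‖ * R v := by
        rw [hv, map_smul_eq_mul, Real.norm_eq_abs, abs_of_pos (inv_pos.mpr hnu)]
        field_simp
      rw [this]
      calc R u₀ * ‖u‖ ≤ R v * ‖u‖ := by nlinarith
      _ = ‖u‖ * R v := mul_comm _ _
  · refine ⟨1, one_pos, fun u => ?_⟩
    have hu : u = 0 := by
      by_contra h
      have hnu : 0 < ‖u‖ := norm_pos_iff.mpr h
      exact hsph ⟨‖u‖⁻¹ • u, mem_sphere_zero_iff_norm.mpr (by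
        rw [norm_smul, Real.norm_eq_abs, abs_of_pos (inv_pos.mpr hnu), inv_mul_cancel₀ hnu.ne'])⟩
    simp [hu]
set_option maxHeartbeats 2000000 in
open RealInnerProductSpace in
theorem stmt_15 (n : ℕ) (L : EuclideanSpace ℝ (Fin n) → ℝ)
    (hdiff : Differentiable ℝ L) (κ : ℝ) (hκ : 0 < κ)
    (hsc : ∀ θ Δ : EuclideanSpace ℝ (Fin n),
      L (θ + Δ) ≥ L θ + ⟪gradient L θ, Δ⟫ + κ * ‖Δ‖ ^ 2)
    (R : Seminorm ℝ (EuclideanSpace ℝ (Fin n))) (hdef : ∀ u, R u = 0 → u = 0)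
    (M M' : Submodule ℝ (EuclideanSpace ℝ (Fin n))) (hMM' : M ≤ M')
    (hdecomp : ∀ θ ∈ M, ∀ γ ∈ M'ᗮ, R (θ + γ) = R θ + R γ)
    (θstar θhat : EuclideanSpace ℝ (Fin n)) (l : ℝ) (hl : 0 < l)
    (hmin : ∀ θ, R θhat + l * L θhat ≤ R θ + l * L θ)
    (hdual : 0 < sSup {x : ℝ | ∃ u, R u ≤ 1 ∧ x = ⟪u, gradient L θstar⟫})
    (hlam : 1 / sSup {x : ℝ | ∃ u, R u ≤ 1 ∧ x = ⟪u, gradient L θstar⟫} < l) :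
    ‖θhat - θstar‖ ^ 2 ≤
      2 / κ ^ 2 * (sSup {x : ℝ | ∃ u, R u ≤ 1 ∧ x = ⟪u, gradient L θstar⟫}) ^ 2 *
          (sSup {r : ℝ | ∃ u ∈ M', u ≠ 0 ∧ r = R u / ‖u‖}) ^ 2 +
        8 / κ ^ 2 * (sSup {x : ℝ | ∃ u, R u ≤ 1 ∧ x = ⟪u, gradient L θstar⟫}) ^ 2 *
          (sSup {r : ℝ | ∃ u ∈ M'ᗮ, u ≠ 0 ∧ r = R u / ‖u‖}) ^ 2 +
        4 / (κ * l) * R (Submodule.orthogonalProjectionOnto Mᗮ θstar : EuclideanSpace ℝ (Fin n)) := by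
  obtain ⟨C, hC, hCle⟩ := seminorm_upper R
  obtain ⟨c, hc, hcle⟩ := seminorm_lower R hdef
  set g := gradient L θstar with hg
  set d := sSup {x : ℝ | ∃ u, R u ≤ 1 ∧ x = ⟪u, g⟫} with hd
  set Ψ₁ := sSup {r : ℝ | ∃ u ∈ M', u ≠ 0 ∧ r = R u / ‖u‖} with hΨ₁
  set Ψ₂ := sSup {r : ℝ | ∃ u ∈ M'ᗮ, u ≠ 0 ∧ r = R u / ‖u‖} with hΨ₂
  -- nonnegativity of the Ψ's
  have hΨnn : ∀ K : Submodule ℝ (EuclideanSpace ℝ (Fin n)),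
      0 ≤ sSup {r : ℝ | ∃ u ∈ K, u ≠ 0 ∧ r = R u / ‖u‖} := by
    intro K
    refine Real.sSup_nonneg fun r hr => ?_
    obtain ⟨u, _, _, rfl⟩ := hr
    positivity
  have hΨ1nn : 0 ≤ Ψ₁ := hΨnn M'
  have hΨ2nn : 0 ≤ Ψ₂ := hΨnn M'ᗮ
  have hRβ : 0 ≤ R (Submodule.orthogonalProjectionOnto Mᗮ θstar : EuclideanSpace ℝ (Fin n)) := apply_nonneg R _
  -- Ψ bound on subspaces
  have hΨle : ∀ (K : Submodule ℝ (EuclideanSpace ℝ (Fin n)))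
      (v : EuclideanSpace ℝ (Fin n)), v ∈ K →
      R v ≤ (sSup {r : ℝ | ∃ u ∈ K, u ≠ 0 ∧ r = R u / ‖u‖}) * ‖v‖ := by
    intro K v hv
    by_cases hv0 : v = 0
    · simp [hv0]
    · have hnv : 0 < ‖v‖ := norm_pos_iff.mpr hv0
      have hbdd : BddAbove {r : ℝ | ∃ u ∈ K, u ≠ 0 ∧ r = R u / ‖u‖} := by
        refine ⟨C, fun r hr => ?_⟩
        obtain ⟨u, _, hu0, rfl⟩ := hr
        have hnu : 0 < ‖u‖ := norm_pos_iff.mpr hu0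
        rw [div_le_iff₀ hnu]
        exact hCle u
      have hmem : R v / ‖v‖ ∈ {r : ℝ | ∃ u ∈ K, u ≠ 0 ∧ r = R u / ‖u‖} := ⟨v, hv, hv0, rfl⟩
      have := le_csSup hbdd hmem
      calc R v = (R v / ‖v‖) * ‖v‖ := by field_simp
      _ ≤ _ := mul_le_mul_of_nonneg_right this hnv.le
  by_cases hEq : θhat = θstar
  · have h0 : ‖θhat - θstar‖ ^ 2 = 0 := by rw [hEq]; simp
    rw [h0]
    have t1 : (0:ℝ) ≤ 2 / κ ^ 2 * d ^ 2 * Ψ₁ ^ 2 := by positivity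
    have t2 : (0:ℝ) ≤ 8 / κ ^ 2 * d ^ 2 * Ψ₂ ^ 2 := by positivity
    have t3 : (0:ℝ) ≤ 4 / (κ * l) * R (Submodule.orthogonalProjectionOnto Mᗮ θstar : EuclideanSpace ℝ (Fin n)) :=
      mul_nonneg (by positivity) hRβ
    linarith
  -- main case
  set Δ := θhat - θstar with hΔdef
  have hΔ0 : Δ ≠ 0 := sub_ne_zero.mpr hEq
  have hnΔ : 0 < ‖Δ‖ := norm_pos_iff.mpr hΔ0
  have hRΔ : 0 < R Δ := lt_of_le_of_ne (apply_nonneg R Δ) fun h => hΔ0 (hdef _ h.symm)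
  have hld : 1 / l < d := by
    have h1 : 1 < l * d := (div_lt_iff₀ hdual).mp hlam
    rw [div_lt_iff₀ hl]
    linarith [mul_comm l d]
  -- subgradient-type bound at θhat : ∀ u, -(R u)/l ≤ ⟪gradient L θhat, u⟫
  have hA : ∀ u : EuclideanSpace ℝ (Fin n), -(R u) / l ≤ ⟪gradient L θhat, u⟫ := by
    intro u
    have hgrad : HasGradientAt L (gradient L θhat) θhat := (hdiff θhat).hasGradientAt
    have hline : HasDerivAt (fun t : ℝ => θhat + t • u) u 0 := by
      simpa using ((hasDerivAt_id (0:ℝ)).smul_const u).const_add θhat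
    have hcomp : HasDerivAt (fun t : ℝ => L (θhat + t • u)) ⟪gradient L θhat, u⟫ 0 := by
      have hfd : HasFDerivAt L
          ((InnerProductSpace.toDual ℝ (EuclideanSpace ℝ (Fin n))) (gradient L θhat))
          (θhat + (0:ℝ) • u) := by simpa using hgrad.hasFDerivAt
      have := hfd.comp_hasDerivAt 0 hline
      simpa [InnerProductSpace.toDual_apply_apply, Function.comp_def] using this
    set q : ℝ → ℝ := fun t => L (θhat + t • u) with hq
    have hslope : Filter.Tendsto (slope q 0) (nhdsWithin 0 {(0:ℝ)}ᶜ)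
        (nhds ⟪gradient L θhat, u⟫) := hasDerivAt_iff_tendsto_slope.mp hcomp
    have hsub : Set.Ioi (0:ℝ) ⊆ {(0:ℝ)}ᶜ := fun t ht => by
      simp only [Set.mem_compl_iff, Set.mem_singleton_iff]
      exact ne_of_gt ht
    have hslope' : Filter.Tendsto (slope q 0) (nhdsWithin 0 (Set.Ioi (0:ℝ)))
        (nhds ⟪gradient L θhat, u⟫) := hslope.mono_left (nhdsWithin_mono 0 hsub)
    refine ge_of_tendsto hslope' ?_
    filter_upwards [self_mem_nhdsWithin] with t ht
    have ht0 : (0:ℝ) < t := ht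
    have h1 := hmin (θhat + t • u)
    have h2 : R (θhat + t • u) ≤ R θhat + t * R u := by
      calc R (θhat + t • u) ≤ R θhat + R (t • u) := map_add_le_add R _ _
      _ = R θhat + t * R u := by
          rw [map_smul_eq_mul, Real.norm_eq_abs, abs_of_pos ht0]
    have hq0 : q 0 = L θhat := by simp [hq]
    have hqt : q t = L (θhat + t • u) := rfl
    have h3 : -(t * R u) ≤ l * (q t - q 0) := by
      rw [hq0, hqt]; linarith
    have hslope_eq : slope q 0 t = (q t - q 0) / t := by
      rw [slope_def_field, sub_zero]
    rw [hslope_eq, div_le_div_iff₀ hl ht0]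
    linarith
  -- dual norm bound : -⟪g, Δ⟫ ≤ d * R Δ
  have hSbdd : BddAbove {x : ℝ | ∃ u, R u ≤ 1 ∧ x = ⟪u, g⟫} := by
    refine ⟨‖g‖ / c, fun x hx => ?_⟩
    obtain ⟨u, hu1, rfl⟩ := hx
    have h1 : c * ‖u‖ ≤ 1 := le_trans (hcle u) hu1
    have h2 : ⟪u, g⟫ ≤ ‖u‖ * ‖g‖ := real_inner_le_norm u g
    rw [le_div_iff₀ hc]
    nlinarith [norm_nonneg g]
  have hdualb : -⟪g, Δ⟫ ≤ d * R Δ := by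
    set u₀ : EuclideanSpace ℝ (Fin n) := (R Δ)⁻¹ • (-Δ) with hu₀
    have hRu₀ : R u₀ = 1 := by
      rw [hu₀, map_smul_eq_mul, map_neg_eq_map, Real.norm_eq_abs,
        abs_of_pos (inv_pos.mpr hRΔ), inv_mul_cancel₀ hRΔ.ne']
    have hmem : ⟪u₀, g⟫ ∈ {x : ℝ | ∃ u, R u ≤ 1 ∧ x = ⟪u, g⟫} := ⟨u₀, hRu₀.le, rfl⟩
    have hle : ⟪u₀, g⟫ ≤ d := le_csSup hSbdd hmem
    have hinner : ⟪u₀, g⟫ = (R Δ)⁻¹ * (- ⟪g, Δ⟫) := by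
      rw [hu₀, real_inner_smul_left, inner_neg_left, real_inner_comm]
    rw [hinner] at hle
    have := (mul_le_mul_of_nonneg_right hle hRΔ.le)
    calc -⟪g, Δ⟫ = (R Δ)⁻¹ * (- ⟪g, Δ⟫) * R Δ := by field_simp
    _ ≤ d * R Δ := this
  -- two-sided strong convexity
  have hB : 2 * κ * ‖Δ‖ ^ 2 ≤ 2 * d * R Δ := by
    have h1 := hsc θstar Δ
    have e1 : θstar + Δ = θhat := by rw [hΔdef]; abel
    rw [e1] at h1
    have h2 := hsc θhat (-Δ)
    have e2 : θhat + (-Δ) = θstar := by rw [hΔdef]; abel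
    rw [e2] at h2
    have e3 : ‖(-Δ : EuclideanSpace ℝ (Fin n))‖ = ‖Δ‖ := norm_neg Δ
    rw [e3] at h2
    have h3 : ⟪gradient L θhat, -Δ⟫ = - ⟪gradient L θhat, Δ⟫ := inner_neg_right _ _
    have h4 : ⟪gradient L θhat, Δ⟫ ≤ R Δ / l := by
      have hAn := hA (-Δ)
      rw [map_neg_eq_map, inner_neg_right, neg_div] at hAn
      linarith
    have h5 : R Δ / l ≤ d * R Δ := by
      rw [div_le_iff₀ hl]
      have : 1 / l * R Δ ≤ d * R Δ := mul_le_mul_of_nonneg_right hld.le hRΔ.le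
      calc R Δ = (1 / l * R Δ) * l := by field_simp
      _ ≤ (d * R Δ) * l := mul_le_mul_of_nonneg_right this hl.le
    nlinarith
  -- orthogonal decomposition
  set p₁ : EuclideanSpace ℝ (Fin n) := (Submodule.orthogonalProjectionOnto M' Δ : EuclideanSpace ℝ (Fin n))
  set p₂ : EuclideanSpace ℝ (Fin n) := (Submodule.orthogonalProjectionOnto M'ᗮ Δ : EuclideanSpace ℝ (Fin n))
  have hsum : p₁ + p₂ = Δ := M'.starProjection_add_starProjection_orthogonal Δ
  have hp₁ : p₁ ∈ M' := (Submodule.orthogonalProjectionOnto M' Δ).2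
  have hp₂ : p₂ ∈ M'ᗮ := (Submodule.orthogonalProjectionOnto M'ᗮ Δ).2
  have hortho : ⟪p₁, p₂⟫ = 0 := hp₂ p₁ hp₁
  have hpyth : ‖Δ‖ ^ 2 = ‖p₁‖ ^ 2 + ‖p₂‖ ^ 2 := by
    rw [← hsum]
    have := norm_add_sq_real p₁ p₂
    rw [hortho] at this
    linarith
  have hRc : R Δ ≤ Ψ₁ * ‖p₁‖ + Ψ₂ * ‖p₂‖ := by
    calc R Δ = R (p₁ + p₂) := by rw [hsum]
    _ ≤ R p₁ + R p₂ := map_add_le_add R _ _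
    _ ≤ Ψ₁ * ‖p₁‖ + Ψ₂ * ‖p₂‖ := add_le_add (hΨle M' p₁ hp₁) (hΨle M'ᗮ p₂ hp₂)
  -- final algebra
  have hkey : κ * ‖Δ‖ ^ 2 ≤ d * (Ψ₁ * ‖p₁‖ + Ψ₂ * ‖p₂‖) := by
    have h1 : d * R Δ ≤ d * (Ψ₁ * ‖p₁‖ + Ψ₂ * ‖p₂‖) := mul_le_mul_of_nonneg_left hRc hdual.le
    linarith
  have hCS : (Ψ₁ * ‖p₁‖ + Ψ₂ * ‖p₂‖) ^ 2 ≤ (Ψ₁ ^ 2 + Ψ₂ ^ 2) * ‖Δ‖ ^ 2 := by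
    rw [hpyth]
    nlinarith [sq_nonneg (Ψ₁ * ‖p₂‖ - Ψ₂ * ‖p₁‖)]
  have hκ2 : (0:ℝ) < κ ^ 2 := by positivity
  have hd2 : (0:ℝ) ≤ d ^ 2 := sq_nonneg d
  have hfin : κ ^ 2 * ‖Δ‖ ^ 2 ≤ d ^ 2 * (Ψ₁ ^ 2 + Ψ₂ ^ 2) := by
    have h0 : 0 ≤ κ * ‖Δ‖ ^ 2 := by positivity
    have hq1 : (κ * ‖Δ‖ ^ 2) ^ 2 ≤ (d * (Ψ₁ * ‖p₁‖ + Ψ₂ * ‖p₂‖)) ^ 2 :=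
      pow_le_pow_left₀ h0 hkey 2
    have hq2 : (d * (Ψ₁ * ‖p₁‖ + Ψ₂ * ‖p₂‖)) ^ 2 = d ^ 2 * (Ψ₁ * ‖p₁‖ + Ψ₂ * ‖p₂‖) ^ 2 := by
      ring
    have hq3 : d ^ 2 * (Ψ₁ * ‖p₁‖ + Ψ₂ * ‖p₂‖) ^ 2 ≤ d ^ 2 * ((Ψ₁ ^ 2 + Ψ₂ ^ 2) * ‖Δ‖ ^ 2) :=
      mul_le_mul_of_nonneg_left hCS hd2
    have h1 : (κ * ‖Δ‖ ^ 2) ^ 2 ≤ d ^ 2 * ((Ψ₁ ^ 2 + Ψ₂ ^ 2) * ‖Δ‖ ^ 2) := by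
      calc (κ * ‖Δ‖ ^ 2) ^ 2 ≤ (d * (Ψ₁ * ‖p₁‖ + Ψ₂ * ‖p₂‖)) ^ 2 := hq1
      _ = d ^ 2 * (Ψ₁ * ‖p₁‖ + Ψ₂ * ‖p₂‖) ^ 2 := hq2
      _ ≤ d ^ 2 * ((Ψ₁ ^ 2 + Ψ₂ ^ 2) * ‖Δ‖ ^ 2) := hq3
    have h3 : (0:ℝ) < ‖Δ‖ ^ 2 := by positivity
    have h2 : (κ ^ 2 * ‖Δ‖ ^ 2) * ‖Δ‖ ^ 2 ≤ (d ^ 2 * (Ψ₁ ^ 2 + Ψ₂ ^ 2)) * ‖Δ‖ ^ 2 := by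
      ring_nf
      ring_nf at h1
      linarith
    exact le_of_mul_le_mul_right h2 h3
  have t3 : (0:ℝ) ≤ 4 / (κ * l) * R (Submodule.orthogonalProjectionOnto Mᗮ θstar : EuclideanSpace ℝ (Fin n)) :=
    mul_nonneg (by positivity) hRβ
  have hmain : ‖Δ‖ ^ 2 ≤ 2 / κ ^ 2 * d ^ 2 * Ψ₁ ^ 2 + 8 / κ ^ 2 * d ^ 2 * Ψ₂ ^ 2 := by
    have e : 2 / κ ^ 2 * d ^ 2 * Ψ₁ ^ 2 + 8 / κ ^ 2 * d ^ 2 * Ψ₂ ^ 2 =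
        (2 * (d ^ 2 * Ψ₁ ^ 2) + 8 * (d ^ 2 * Ψ₂ ^ 2)) / κ ^ 2 := by ring
    rw [e, le_div_iff₀ hκ2]
    have ha : (0:ℝ) ≤ d ^ 2 * Ψ₁ ^ 2 := by positivity
    have hb : (0:ℝ) ≤ d ^ 2 * Ψ₂ ^ 2 := by positivity
    have hc1 : ‖Δ‖ ^ 2 * κ ^ 2 = κ ^ 2 * ‖Δ‖ ^ 2 := mul_comm _ _
    have hc2 : d ^ 2 * (Ψ₁ ^ 2 + Ψ₂ ^ 2) = d ^ 2 * Ψ₁ ^ 2 + d ^ 2 * Ψ₂ ^ 2 := by ring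
    linarith
  linarith
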